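/- arXiv:1912.07418 — 5 statements merged into one kernel-verified Lean document; each statement's English description precedes it below -/
import Mathlib

section
/- Fix a penalty parameter C > 0 and a bound M with 0 < M < ∞. The L_{0/1}-SVM problem of minimizing f(w,b) = (1/2)‖w‖² + C‖(1 − Aw − b y)_+‖₀ over all w ∈ ℝⁿ and b ∈ [−M, M] attains a global minimum, and the set of its global minimizers is a bounded subset of ℝⁿ × ℝ. -/
open Finset

noncomputable def l01norm {m : ℕ} (v : Fin m → ℝ) : ℕ :=
  (Finset.univ.filter fun i => 0 < v i).card

noncomputable def svmObj {m n : ℕ} (A : Matrix (Fin m) (Fin n) ℝ) (y : Fin m → ℝ)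
    (C : ℝ) (w : Fin n → ℝ) (b : ℝ) : ℝ :=
  (1 / 2) * (∑ j, (w j) ^ 2) +
    C * (l01norm (fun i => 1 - A.mulVec w i - b * y i) : ℝ)

/-- A nonnegative lower semicontinuous function on a nonempty compact closed set
attains its minimum. -/
lemma lsc_exists_min {X : Type*} [TopologicalSpace X] {f : X → ℝ}
    (hf : LowerSemicontinuous f) {s : Set X} (hs : IsCompact s) (hcl : IsClosed s)
    (hne : s.Nonempty) (h0 : ∀ x, 0 ≤ f x) :
    ∃ x ∈ s, ∀ y ∈ s, f x ≤ f y := by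
  set α := sInf (f '' s) with hα
  have hbdd : BddBelow (f '' s) := ⟨0, by rintro _ ⟨x, -, rfl⟩; exact h0 x⟩
  have hne' : (f '' s).Nonempty := hne.image f
  set t : ℕ → Set X := fun k => s ∩ f ⁻¹' Set.Iic (α + 1 / (k + 1)) with ht
  have htd : ∀ k, t (k + 1) ⊆ t k := by
    intro k x hx
    refine ⟨hx.1, ?_⟩
    have h2 := hx.2
    simp only [Set.mem_preimage, Set.mem_Iic] at h2 ⊢
    have hle : (1 : ℝ) / ((k : ℝ) + 1 + 1) ≤ 1 / ((k : ℝ) + 1) := by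
      apply one_div_le_one_div_of_le (by positivity) (by linarith)
    push_cast at h2 ⊢
    linarith
  have htn : ∀ k, (t k).Nonempty := by
    intro k
    have hpos : (0 : ℝ) < 1 / (k + 1) := by positivity
    obtain ⟨v, ⟨z, hz, rfl⟩, hvlt⟩ :=
      exists_lt_of_csInf_lt hne' (show α < α + 1 / (k + 1) by linarith)
    exact ⟨z, hz, le_of_lt hvlt⟩
  have htcl : ∀ k, IsClosed (t k) := fun k => hcl.inter (hf.isClosed_preimage _)
  obtain ⟨x, hx⟩ := IsCompact.nonempty_iInter_of_sequence_nonempty_isCompact_isClosed t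
    htd htn (hs.inter_right (hf.isClosed_preimage _)) htcl
  have hxs : x ∈ s := (Set.mem_iInter.1 hx 0).1
  refine ⟨x, hxs, fun z hz => ?_⟩
  have hfx : f x ≤ α := by
    refine le_of_forall_pos_le_add fun ε hε => ?_
    obtain ⟨k, hk⟩ := exists_nat_one_div_lt hε
    have := (Set.mem_iInter.1 hx k).2
    simp only [Set.mem_preimage, Set.mem_Iic] at this
    linarith
  exact hfx.trans (csInf_le hbdd ⟨z, hz, rfl⟩)

lemma svmObj_as_sum {m n : ℕ} (A : Matrix (Fin m) (Fin n) ℝ) (y : Fin m → ℝ)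
    (C : ℝ) (w : Fin n → ℝ) (b : ℝ) :
    svmObj A y C w b = (1 / 2) * (∑ j, (w j) ^ 2) +
      ∑ i, Set.indicator {p : (Fin n → ℝ) × ℝ |
          0 < 1 - A.mulVec p.1 i - p.2 * y i} (fun _ => C) (w, b) := by
  unfold svmObj l01norm
  congr 1
  rw [Finset.card_filter, Nat.cast_sum, Finset.mul_sum]
  refine Finset.sum_congr rfl fun i _ => ?_
  rw [Set.indicator_apply]
  by_cases h : ((w, b) : (Fin n → ℝ) × ℝ) ∈ {p : (Fin n → ℝ) × ℝ |
      0 < 1 - A.mulVec p.1 i - p.2 * y i}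
  · rw [if_pos h, if_pos (by simpa using h)]; simp
  · rw [if_neg h, if_neg (by simpa using h)]; simp

lemma svmObj_nonneg {m n : ℕ} (A : Matrix (Fin m) (Fin n) ℝ) (y : Fin m → ℝ)
    {C : ℝ} (hC : 0 ≤ C) (w : Fin n → ℝ) (b : ℝ) : 0 ≤ svmObj A y C w b := by
  unfold svmObj
  have h1 : (0 : ℝ) ≤ ∑ j, (w j) ^ 2 := Finset.sum_nonneg fun j _ => sq_nonneg _
  positivity

lemma svmObj_sq_le {m n : ℕ} (A : Matrix (Fin m) (Fin n) ℝ) (y : Fin m → ℝ)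
    {C : ℝ} (hC : 0 ≤ C) (w : Fin n → ℝ) (b : ℝ) :
    (1 / 2) * (∑ j, (w j) ^ 2) ≤ svmObj A y C w b := by
  unfold svmObj
  have : (0 : ℝ) ≤ C * (l01norm (fun i => 1 - A.mulVec w i - b * y i) : ℝ) := by positivity
  linarith

lemma svmObj_zero_le {m n : ℕ} (A : Matrix (Fin m) (Fin n) ℝ) (y : Fin m → ℝ)
    {C : ℝ} (hC : 0 ≤ C) (b : ℝ) :
    svmObj A y C 0 b ≤ C * m := by
  unfold svmObj
  have h1 : ∑ j, ((0 : Fin n → ℝ) j) ^ 2 = 0 := by simp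
  have h2 : (l01norm (fun i => 1 - A.mulVec 0 i - b * y i) : ℝ) ≤ m := by
    exact_mod_cast (Finset.card_filter_le _ _).trans (by simp)
  rw [h1]
  have := mul_le_mul_of_nonneg_left h2 hC
  linarith

lemma svmObj_lsc {m n : ℕ} (A : Matrix (Fin m) (Fin n) ℝ) (y : Fin m → ℝ)
    {C : ℝ} (hC : 0 ≤ C) :
    LowerSemicontinuous (fun p : (Fin n → ℝ) × ℝ => svmObj A y C p.1 p.2) := by
  have heq : (fun p : (Fin n → ℝ) × ℝ => svmObj A y C p.1 p.2) =
      fun p => (1 / 2) * (∑ j, (p.1 j) ^ 2) +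
        ∑ i, Set.indicator {q : (Fin n → ℝ) × ℝ |
          0 < 1 - A.mulVec q.1 i - q.2 * y i} (fun _ => C) p := by
    funext p
    exact svmObj_as_sum A y C p.1 p.2
  rw [heq]
  apply LowerSemicontinuous.add
  · apply Continuous.lowerSemicontinuous
    fun_prop
  · apply lowerSemicontinuous_sum
    intro i _
    apply IsOpen.lowerSemicontinuous_indicator _ hC
    have hcont : Continuous fun q : (Fin n → ℝ) × ℝ =>
        1 - A.mulVec q.1 i - q.2 * y i := by
      have : Continuous fun q : (Fin n → ℝ) × ℝ => A.mulVec q.1 i := by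
        simp only [Matrix.mulVec, dotProduct]
        fun_prop
      fun_prop
    exact isOpen_lt continuous_const hcont

/-- the `L_{0/1}`-SVM objective attains a global minimum over
`ℝⁿ × [-M, M]`, and the set of its global minimizers is bounded. -/
theorem l01svm_minimizer_exists_and_bounded {m n : ℕ}
    (x : Fin m → Fin n → ℝ) (y : Fin m → ℝ) (hy : ∀ i, y i = 1 ∨ y i = -1)
    (A : Matrix (Fin m) (Fin n) ℝ) (hA : ∀ i j, A i j = y i * x i j)
    (C : ℝ) (hC : 0 < C) (M : ℝ) (hM : 0 < M) :
    (∃ wstar : Fin n → ℝ, ∃ bstar : ℝ, bstar ∈ Set.Icc (-M) M ∧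
      ∀ w : Fin n → ℝ, ∀ b ∈ Set.Icc (-M) M,
        svmObj A y C wstar bstar ≤ svmObj A y C w b) ∧
    Bornology.IsBounded {p : (Fin n → ℝ) × ℝ |
      p.2 ∈ Set.Icc (-M) M ∧
      ∀ w : Fin n → ℝ, ∀ b ∈ Set.Icc (-M) M,
        svmObj A y C p.1 p.2 ≤ svmObj A y C w b} := by
  have hC' : (0 : ℝ) ≤ C := hC.le
  set R : ℝ := Real.sqrt (2 * C * m + 2) with hR
  have hR2 : R ^ 2 = 2 * C * m + 2 := Real.sq_sqrt (by positivity)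
  -- the compact set
  set K : Set ((Fin n → ℝ) × ℝ) :=
    (Metric.closedBall 0 R) ×ˢ (Set.Icc (-M) M) with hK
  have hKc : IsCompact K :=
    (isCompact_closedBall 0 R).prod isCompact_Icc
  have hKcl : IsClosed K :=
    Metric.isClosed_closedBall.prod isClosed_Icc
  have h0K : ((0 : Fin n → ℝ), (0 : ℝ)) ∈ K := by
    constructor
    · simp only [Metric.mem_closedBall, dist_self]
      exact Real.sqrt_nonneg _
    · have h02 : ((0 : Fin n → ℝ), (0 : ℝ)).2 = 0 := rfl
      rw [Set.mem_Icc, h02]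
      exact ⟨by linarith, by linarith⟩
  have hKne : K.Nonempty := ⟨(0, 0), h0K⟩
  obtain ⟨⟨wstar, bstar⟩, hmemK, hmin⟩ :=
    lsc_exists_min (svmObj_lsc A y hC') hKc hKcl hKne
      (fun p => svmObj_nonneg A y hC' p.1 p.2)
  have hbstar : bstar ∈ Set.Icc (-M) M := hmemK.2
  -- key : any point with b ∈ Icc is beaten by the minimum on K
  have hglobal : ∀ w : Fin n → ℝ, ∀ b ∈ Set.Icc (-M) M,
      svmObj A y C wstar bstar ≤ svmObj A y C w b := by
    intro w b hb
    by_cases hw : (w, b) ∈ K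
    · exact hmin (w, b) hw
    · -- then ‖w‖ > R, so the objective is large
      have hwR : R < ‖w‖ := by
        by_contra h
        push_neg at h
        exact hw ⟨by simpa [Metric.mem_closedBall] using h, hb⟩
      have hRnn : 0 ≤ R := Real.sqrt_nonneg _
      have hsum : R ^ 2 ≤ ∑ j, (w j) ^ 2 := by
        rcases isEmpty_or_nonempty (Fin n) with hn | hn
        · exfalso
          have : ‖w‖ = 0 := by
            simp [norm_eq_zero]
            exact Subsingleton.elim w 0
          rw [this] at hwR; linarith
        · obtain ⟨j, hj⟩ := Finite.exists_max fun j => |w j|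
          have hnorm : ‖w‖ ≤ |w j| := by
            apply pi_norm_le_iff_of_nonneg (abs_nonneg _) |>.2
            intro k
            simpa [Real.norm_eq_abs] using hj k
          have h1 : R ^ 2 ≤ (w j) ^ 2 := by
            rw [← sq_abs (w j)]
            have : R ≤ |w j| := le_trans hwR.le hnorm
            exact pow_le_pow_left₀ hRnn this 2
          refine h1.trans ?_
          exact Finset.single_le_sum (f := fun k => (w k) ^ 2)
            (fun k _ => sq_nonneg _) (Finset.mem_univ j)
      have hbig : C * m + 1 ≤ svmObj A y C w b := by
        have := svmObj_sq_le A y hC' w b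
        rw [hR2] at hsum
        linarith
      have hsmall : svmObj A y C wstar bstar ≤ C * m := by
        exact (hmin (0, 0) h0K).trans (svmObj_zero_le A y hC' 0)
      linarith
  refine ⟨⟨wstar, bstar, hbstar, hglobal⟩, ?_⟩
  -- boundedness of minimizer set: it is contained in K
  apply Bornology.IsBounded.subset (hKc.isBounded)
  rintro ⟨w, b⟩ ⟨hb, hopt⟩
  refine ⟨?_, hb⟩
  have h1 : svmObj A y C w b ≤ C * m := by
    have h0 : (0 : ℝ) ∈ Set.Icc (-M) M := ⟨by linarith, by linarith⟩
    exact (hopt 0 0 h0).trans (svmObj_zero_le A y hC' 0)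
  have h2 : (1 / 2) * (∑ j, (w j) ^ 2) ≤ C * m :=
    (svmObj_sq_le A y hC' w b).trans h1
  have h3 : ‖w‖ ^ 2 ≤ 2 * C * m + 2 := by
    rcases isEmpty_or_nonempty (Fin n) with hn | hn
    · have : ‖w‖ = 0 := by
        simp [norm_eq_zero]
        exact Subsingleton.elim w 0
      have hm : (0 : ℝ) ≤ (m : ℝ) := Nat.cast_nonneg m
      rw [this]; nlinarith
    · obtain ⟨j, hj⟩ := Finite.exists_max fun j => |w j|
      have hnorm : ‖w‖ ≤ |w j| := by
        apply pi_norm_le_iff_of_nonneg (abs_nonneg _) |>.2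
        intro k
        simpa [Real.norm_eq_abs] using hj k
      have : ‖w‖ ^ 2 ≤ (w j) ^ 2 := by
        rw [← sq_abs (w j)]
        exact pow_le_pow_left₀ (norm_nonneg _) hnorm 2
      have h4 : (w j) ^ 2 ≤ ∑ k, (w k) ^ 2 :=
        Finset.single_le_sum (f := fun k => (w k) ^ 2)
          (fun k _ => sq_nonneg _) (Finset.mem_univ j)
      nlinarith
  have h5 : ‖w‖ ≤ R := by
    have := Real.sqrt_le_sqrt h3
    rwa [Real.sqrt_sq (norm_nonneg _)] at this
  simpa [Metric.mem_closedBall] using h5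
end

section
/- Let γ > 0, C > 0 and z ∈ ℝ^m. Define u* ∈ ℝ^m componentwise by u*_i = 0 if 0 < z_i ≤ √(2γC), and u*_i = z_i otherwise (i.e., if z_i ≤ 0 or z_i > √(2γC)). Then u* is a global minimizer over ℝ^m of the function u ↦ γC‖u_+‖₀ + (1/2)‖u − z‖², i.e., u* belongs to the set Prox_{γC‖(·)_+‖₀}(z). -/
open Finset

lemma l01norm_sum {m : ℕ} (v : Fin m → ℝ) :
    (l01norm v : ℝ) = ∑ i, (if 0 < v i then (1:ℝ) else 0) := by
  unfold l01norm
  rw [Finset.card_filter]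
  push_cast
  rfl

/-- the componentwise formula gives an element of the `L_{0/1}`
proximal operator, i.e. a global minimizer of
`u ↦ γC‖u₊‖₀ + (1/2)‖u − z‖²` over `ℝ^m`. -/
theorem l01_prox_formula {m : ℕ} (γ C : ℝ) (hγ : 0 < γ) (hC : 0 < C)
    (z ustar : Fin m → ℝ)
    (h0 : ∀ i, (0 < z i ∧ z i ≤ Real.sqrt (2 * γ * C)) → ustar i = 0)
    (hid : ∀ i, ¬(0 < z i ∧ z i ≤ Real.sqrt (2 * γ * C)) → ustar i = z i) :
    ∀ u : Fin m → ℝ,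
      γ * C * (l01norm ustar : ℝ) + (1 / 2) * ∑ i, (ustar i - z i) ^ 2
        ≤ γ * C * (l01norm u : ℝ) + (1 / 2) * ∑ i, (u i - z i) ^ 2 := by
  intro u
  have hγC : 0 < γ * C := mul_pos hγ hC
  rw [l01norm_sum, l01norm_sum, Finset.mul_sum, Finset.mul_sum, Finset.mul_sum,
    Finset.mul_sum, ← Finset.sum_add_distrib, ← Finset.sum_add_distrib]
  apply Finset.sum_le_sum
  intro i _
  by_cases hc : 0 < z i ∧ z i ≤ Real.sqrt (2 * γ * C)
  · have hu : ustar i = 0 := h0 i hc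
    have hz2 : z i ^ 2 ≤ 2 * γ * C := by
      have := Real.sq_sqrt (by positivity : (0:ℝ) ≤ 2 * γ * C)
      nlinarith [hc.1, hc.2, Real.sqrt_nonneg (2 * γ * C)]
    rw [hu]
    simp only [lt_irrefl, if_false]
    by_cases ht : 0 < u i
    · rw [if_pos ht]
      nlinarith [sq_nonneg (u i - z i)]
    · rw [if_neg ht]
      push_neg at ht
      nlinarith [hc.1]
  · have hu : ustar i = z i := hid i hc
    rw [hu]
    push_neg at hc
    by_cases hz : 0 < z i
    · have hgt : Real.sqrt (2 * γ * C) < z i := hc hz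
      have hz2 : 2 * γ * C < z i ^ 2 := by
        have := Real.sq_sqrt (by positivity : (0:ℝ) ≤ 2 * γ * C)
        nlinarith [Real.sqrt_nonneg (2 * γ * C)]
      rw [if_pos hz]
      by_cases ht : 0 < u i
      · rw [if_pos ht]; nlinarith [sq_nonneg (u i - z i)]
      · rw [if_neg ht]; push_neg at ht; nlinarith
    · rw [if_neg hz]
      push_neg at hz
      by_cases ht : 0 < u i
      · rw [if_pos ht]; nlinarith [sq_nonneg (u i - z i)]
      · rw [if_neg ht]; nlinarith [sq_nonneg (u i - z i)]
end

section
/- Let C > 0 and let g : ℝ^m → ℝ be differentiable with gradient ∇g Lipschitz continuous with constant γ_g > 0. If u* is a global minimizer over ℝ^m of u ↦ g(u) + C‖u_+‖₀, then for every γ with 0 < γ < 1/γ_g, u* is a P-stationary point with parameter γ; that is, writing z_i = u*_i − γ(∇g(u*))_i for each i, one has u*_i = 0 if 0 < z_i ≤ √(2γC), and u*_i = z_i otherwise. -/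
open Finset

lemma descent_lemma {m : ℕ} (g : EuclideanSpace ℝ (Fin m) → ℝ)
    (g' : EuclideanSpace ℝ (Fin m) → EuclideanSpace ℝ (Fin m))
    (hg : ∀ u, HasGradientAt g (g' u) u)
    (L : NNReal) (hLip : LipschitzWith L g')
    (x v : EuclideanSpace ℝ (Fin m)) :
    g (x + v) ≤ g x + @inner ℝ _ _ (g' x) v + (L / 2) * ‖v‖ ^ 2 := by
  set ψ : ℝ → ℝ := fun t => g (x + t • v) - t * @inner ℝ _ _ (g' x) v - (L / 2) * t ^ 2 * ‖v‖ ^ 2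
    with hψ
  have hderiv : ∀ t : ℝ, HasDerivAt ψ
      (@inner ℝ _ _ (g' (x + t • v)) v - @inner ℝ _ _ (g' x) v - L * t * ‖v‖ ^ 2) t := by
    intro t
    have hline : HasDerivAt (fun t : ℝ => x + t • v) v t := by
      simpa using ((hasDerivAt_id t).smul_const v).const_add x
    have h1 : HasDerivAt (fun t : ℝ => g (x + t • v)) (@inner ℝ _ _ (g' (x + t • v)) v) t := by
      have := ((hg (x + t • v)).hasFDerivAt).comp_hasDerivAt t hline
      simp at this
      exact this
    have h2 : HasDerivAt (fun t : ℝ => t * @inner ℝ _ _ (g' x) v) (@inner ℝ _ _ (g' x) v) t := by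
      simpa using (hasDerivAt_id t).mul_const (@inner ℝ _ _ (g' x) v)
    have h3 : HasDerivAt (fun t : ℝ => (L / 2 : ℝ) * t ^ 2 * ‖v‖ ^ 2) (L * t * ‖v‖ ^ 2) t := by
      have := ((hasDerivAt_pow 2 t).const_mul (L / 2 : ℝ)).mul_const (‖v‖ ^ 2)
      refine this.congr_deriv ?_
      push_cast
      ring
    exact (h1.sub h2).sub h3
  have hmono : AntitoneOn ψ (Set.Icc (0:ℝ) 1) := by
    apply antitoneOn_of_deriv_nonpos (convex_Icc 0 1)
    · exact (Differentiable.continuous (fun t => (hderiv t).differentiableAt)).continuousOn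
    · intro t ht
      exact (hderiv t).differentiableAt.differentiableWithinAt
    · intro t ht
      rw [interior_Icc] at ht
      rw [(hderiv t).deriv]
      have key : @inner ℝ _ _ (g' (x + t • v)) v - @inner ℝ _ _ (g' x) v
          = @inner ℝ _ _ (g' (x + t • v) - g' x) v := by rw [inner_sub_left]
      rw [key]
      have h1 : @inner ℝ _ _ (g' (x + t • v) - g' x) v ≤ ‖g' (x + t • v) - g' x‖ * ‖v‖ :=
        real_inner_le_norm _ _
      have h2 : ‖g' (x + t • v) - g' x‖ ≤ L * (t * ‖v‖) := by
        have := hLip.dist_le_mul (x + t • v) x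
        rw [dist_eq_norm] at this
        simpa [norm_smul, abs_of_pos ht.1, mul_assoc] using this
      nlinarith [norm_nonneg v, mul_le_mul_of_nonneg_right h2 (norm_nonneg v), ht.1.le]
  have h01 := hmono (Set.left_mem_Icc.2 zero_le_one) (Set.right_mem_Icc.2 zero_le_one) zero_le_one
  simp only [hψ] at h01
  simp only [zero_smul, add_zero, one_smul, zero_mul, one_pow, mul_zero, sub_zero] at h01
  linarith [h01]

lemma filter_card_update {m : ℕ} (P Q : Fin m → Prop) [DecidablePred P] [DecidablePred Q]
    (i : Fin m) (h : ∀ j, j ≠ i → (P j ↔ Q j)) :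
    (Finset.univ.filter P).card + (if Q i then 1 else 0) =
    (Finset.univ.filter Q).card + (if P i then 1 else 0) := by
  rw [Finset.card_filter, Finset.card_filter,
      ← Finset.add_sum_erase _ _ (Finset.mem_univ i),
      ← Finset.add_sum_erase _ _ (Finset.mem_univ i)]
  have hS : ∑ j ∈ Finset.univ.erase i, (if P j then 1 else 0)
      = ∑ j ∈ Finset.univ.erase i, (if Q j then 1 else 0) :=
    Finset.sum_congr rfl (fun j hj => if_congr (h j (Finset.ne_of_mem_erase hj)) rfl rfl)
  rw [hS]; ring

/-- if `g` is differentiable with `γ_g`-Lipschitz gradient and `u*`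
globally minimizes `u ↦ g(u) + C‖u₊‖₀`, then for every `0 < γ < 1/γ_g`, `u*` is a
P-stationary point with parameter `γ`: componentwise, with
`z_i = u*_i − γ(∇g(u*))_i`, one has `u*_i = 0` if `0 < z_i ≤ √(2γC)` and
`u*_i = z_i` otherwise. -/
theorem global_min_is_PStationary_general {m : ℕ} (C : ℝ) (hC : 0 < C)
    (g : EuclideanSpace ℝ (Fin m) → ℝ)
    (g' : EuclideanSpace ℝ (Fin m) → EuclideanSpace ℝ (Fin m))
    (hg : ∀ u, HasGradientAt g (g' u) u)
    (γg : NNReal) (hγg : 0 < γg) (hLip : LipschitzWith γg g')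
    (ustar : EuclideanSpace ℝ (Fin m))
    (hmin : ∀ u : EuclideanSpace ℝ (Fin m),
      g ustar + C * (l01norm (fun i => ustar i) : ℝ)
        ≤ g u + C * (l01norm (fun i => u i) : ℝ)) :
    ∀ γ : ℝ, 0 < γ → γ < 1 / (γg : ℝ) →
      (∀ i, (0 < ustar i - γ * g' ustar i ∧
          ustar i - γ * g' ustar i ≤ Real.sqrt (2 * γ * C)) → ustar i = 0) ∧
      (∀ i, ¬(0 < ustar i - γ * g' ustar i ∧
          ustar i - γ * g' ustar i ≤ Real.sqrt (2 * γ * C)) →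
          ustar i = ustar i - γ * g' ustar i) := by
  have hL : (0:ℝ) < (γg : ℝ) := hγg
  -- key coordinatewise inequality
  have key : ∀ (i : Fin m) (t : ℝ),
      C * (if 0 < ustar i then (1:ℝ) else 0) ≤
        t * g' ustar i + ((γg:ℝ)/2) * t^2 + C * (if 0 < ustar i + t then (1:ℝ) else 0) := by
    intro i t
    set v : EuclideanSpace ℝ (Fin m) := t • EuclideanSpace.single i (1:ℝ) with hv
    have hdesc := descent_lemma g g' hg γg hLip ustar v
    have hinner : @inner ℝ _ _ (g' ustar) v = t * g' ustar i := by
      rw [hv, inner_smul_right, EuclideanSpace.inner_single_right]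
      simp [mul_comm]
    have hnorm : ‖v‖ ^ 2 = t ^ 2 := by
      rw [hv, norm_smul]
      simp [sq_abs]
    have heval : ∀ j, (ustar + v) j = ustar j + (if j = i then t else 0) := by
      intro j
      rw [hv]
      simp [EuclideanSpace.single_apply, mul_comm]
    have hNnat := filter_card_update (fun j => (0:ℝ) < (ustar + v) j) (fun j => (0:ℝ) < ustar j) i
      (fun j hj => by simp only [heval j, if_neg hj, add_zero])
    have hNi : (ustar + v) i = ustar i + t := by rw [heval i, if_pos rfl]
    have hN : (l01norm (fun j => (ustar + v) j) : ℝ) + (if 0 < ustar i then (1:ℝ) else 0)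
        = (l01norm (fun j => ustar j) : ℝ) + (if 0 < ustar i + t then (1:ℝ) else 0) := by
      unfold l01norm
      rw [← hNi]
      beta_reduce
      exact_mod_cast hNnat
    have hm := hmin (ustar + v)
    rw [hinner, hnorm] at hdesc
    have hCm : C * ((l01norm (fun j => (ustar + v) j) : ℝ) + (if 0 < ustar i then (1:ℝ) else 0))
        = C * ((l01norm (fun j => ustar j) : ℝ) + (if 0 < ustar i + t then (1:ℝ) else 0)) := by
      rw [hN]
    rw [mul_add, mul_add] at hCm
    linarith
  intro γ hγ0 hγ1
  have hγL : γ * (γg : ℝ) < 1 := by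
    rw [lt_div_iff₀ hL] at hγ1
    linarith
  -- coordinatewise analysis
  have claimA : ∀ i, ustar i ≠ 0 → g' ustar i = 0 := by
    intro i ha
    by_contra hd
    set a := ustar i
    set d := g' ustar i
    have hsa : (0:ℝ) < |a| / 2 := by positivity
    have hsd : (0:ℝ) < |d| / (γg:ℝ) := by positivity
    set s := min (|a| / 2) (|d| / (γg:ℝ)) with hs
    have hs0 : 0 < s := lt_min hsa hsd
    set t : ℝ := if 0 < d then -s else s with ht
    have htabs : |t| = s := by
      rw [ht]; split <;> simp [abs_of_pos hs0, abs_of_neg (neg_neg_iff_pos.mpr hs0)]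
    have htd : t * d = -(s * |d|) := by
      rw [ht]
      rcases lt_trichotomy 0 d with h | h | h
      · rw [if_pos h, abs_of_pos h]; ring
      · exact absurd h.symm hd
      · rw [if_neg (by linarith), abs_of_neg h]; ring
    have hts : t ^ 2 = s ^ 2 := by rw [← sq_abs, htabs]
    have hind : (if 0 < a + t then (1:ℝ) else 0) = (if 0 < a then (1:ℝ) else 0) := by
      have htle : |t| ≤ |a| / 2 := by rw [htabs]; exact min_le_left _ _
      have h1 : -(|a|/2) ≤ t := by cases abs_le.mp htle; linarith
      have h2 : t ≤ |a|/2 := (abs_le.mp htle).2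
      rcases lt_trichotomy 0 a with h | h | h
      · rw [abs_of_pos h] at h1 h2
        rw [if_pos (by linarith), if_pos h]
      · exact absurd h.symm ha
      · rw [abs_of_neg h] at h1 h2
        rw [if_neg (by push_neg; linarith), if_neg (by push_neg; linarith)]
    have hk := key i t
    rw [hind] at hk
    have hss : ((γg:ℝ)/2) * t ^ 2 ≤ s * |d| / 2 := by
      rw [hts]
      have : s ≤ |d| / (γg:ℝ) := min_le_right _ _
      have h2 : s * (γg:ℝ) ≤ |d| := by
        rw [← le_div_iff₀ hL] at *; linarith
      nlinarith
    have habs : 0 < |d| := abs_pos.mpr hd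
    nlinarith
  have claim0 : ∀ i, ustar i = 0 → g' ustar i ≤ 0 := by
    intro i ha
    by_contra hd
    push_neg at hd
    have hk := key i (-(g' ustar i / (γg:ℝ)))
    rw [ha] at hk
    have h1 : ¬ (0:ℝ) < 0 := lt_irrefl 0
    have h2 : ¬ (0:ℝ) < 0 + -(g' ustar i / (γg:ℝ)) := by
      push_neg
      have : 0 < g' ustar i / (γg:ℝ) := by positivity
      linarith
    rw [if_neg h1, if_neg h2] at hk
    have hexp : (-(g' ustar i / (γg:ℝ))) * g' ustar i + ((γg:ℝ)/2) * (-(g' ustar i / (γg:ℝ)))^2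
        = -(g' ustar i ^ 2 / (2 * (γg:ℝ))) := by
      field_simp
      ring
    rw [hexp] at hk
    have : 0 < g' ustar i ^ 2 / (2 * (γg:ℝ)) := by positivity
    linarith
  constructor
  · rintro i ⟨hz1, hz2⟩
    by_contra ha
    have hd := claimA i ha
    rw [hd, mul_zero, sub_zero] at hz1 hz2
    -- now 0 < ustar i ≤ √(2γC); derive contradiction from key with t = -ustar i
    have hk := key i (-(ustar i))
    rw [if_pos hz1, if_neg (by simp), hd] at hk
    have ha2 : 2 * C ≤ (γg:ℝ) * (ustar i) ^ 2 := by nlinarith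
    have hsq : (ustar i) ^ 2 ≤ 2 * γ * C := by
      nlinarith [Real.sq_sqrt (show (0:ℝ) ≤ 2 * γ * C by positivity), Real.sqrt_nonneg (2 * γ * C)]
    nlinarith
  · intro i hni
    have hd : g' ustar i = 0 := by
      rcases eq_or_ne (ustar i) 0 with ha | ha
      · have hd0 := claim0 i ha
        rcases eq_or_lt_of_le hd0 with h | h
        · exact h
        · exfalso
          apply hni
          rw [ha, zero_sub]
          constructor
          · nlinarith
          · -- show -(γ * g' ustar i) ≤ √(2γC)
            have hk := key i (-(g' ustar i / (γg:ℝ)))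
            rw [ha] at hk
            have hpos : 0 < -(g' ustar i) := by linarith
            have h2 : (0:ℝ) < 0 + -(g' ustar i / (γg:ℝ)) := by
              have : 0 < -(g' ustar i) / (γg:ℝ) := by positivity
              rw [zero_add, ← neg_div]; exact this
            rw [if_neg (lt_irrefl 0), if_pos h2] at hk
            have hd2 : g' ustar i ^ 2 ≤ 2 * C * (γg:ℝ) := by
              have hexp : (-(g' ustar i / (γg:ℝ))) * g' ustar i
                  + ((γg:ℝ)/2) * (-(g' ustar i / (γg:ℝ)))^2
                  = -(g' ustar i ^ 2 / (2 * (γg:ℝ))) := by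
                field_simp
                ring
              rw [hexp] at hk
              have h3 : g' ustar i ^ 2 / (2 * (γg:ℝ)) ≤ C := by linarith
              have h4 := (div_le_iff₀ (show (0:ℝ) < 2 * (γg:ℝ) by positivity)).mp h3
              linarith
            have hlt : (-(γ * g' ustar i)) ^ 2 < 2 * γ * C := by
              have e1 : γ ^ 2 * (g' ustar i ^ 2) ≤ γ ^ 2 * (2 * C * (γg:ℝ)) :=
                mul_le_mul_of_nonneg_left hd2 (sq_nonneg γ)
              have e2 : γ ^ 2 * (2 * C * (γg:ℝ)) < 2 * γ * C := by
                have := mul_pos hγ0 hC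
                nlinarith
              nlinarith
            have : -(γ * g' ustar i) < Real.sqrt (2 * γ * C) := by
              rw [← Real.sqrt_sq (by nlinarith : (0:ℝ) ≤ -(γ * g' ustar i))]
              exact Real.sqrt_lt_sqrt (by positivity) hlt
            linarith
      · exact claimA i ha
    rw [hd, mul_zero, sub_zero]
end

section
/- Let C > 0 and let g : ℝ^m → ℝ be convex and differentiable. If u* ∈ ℝ^m is a P-stationary point with some parameter γ > 0 of the problem min_{u∈ℝ^m} g(u) + C‖u_+‖₀, then u* is a local minimizer of u ↦ g(u) + C‖u_+‖₀. -/
open Finset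

lemma coord_abs_le_norm {m : ℕ} (w : EuclideanSpace ℝ (Fin m)) (i : Fin m) :
    |w i| ≤ ‖w‖ := by
  rw [EuclideanSpace.norm_eq]
  have h1 : |w i| = Real.sqrt ((w i) ^ 2) := (Real.sqrt_sq_eq_abs _).symm
  rw [h1]
  apply Real.sqrt_le_sqrt
  have := Finset.single_le_sum (f := fun j => ‖w j‖ ^ 2)
    (fun j _ => sq_nonneg _) (Finset.mem_univ i)
  simpa [Real.norm_eq_abs, sq_abs] using this

lemma grad_convex_ineq {m : ℕ} {g : EuclideanSpace ℝ (Fin m) → ℝ}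
    (hconv : ConvexOn ℝ Set.univ g) {a x : EuclideanSpace ℝ (Fin m)}
    (hg : HasGradientAt g a x) (u : EuclideanSpace ℝ (Fin m)) :
    (∑ i, a i * (u i - x i)) ≤ g u - g x := by
  set v := u - x with hv
  set φ : ℝ → ℝ := fun t => g (t • v + x) with hφ
  have hL : HasDerivAt (fun t : ℝ => t • v + x) v 0 := by
    simpa using ((hasDerivAt_id (0:ℝ)).smul_const v).add_const x
  have hd : HasDerivAt φ ((InnerProductSpace.toDual ℝ _ a) v) 0 := by
    have hx : (0:ℝ) • v + x = x := by simp
    have hF : HasFDerivAt g ((InnerProductSpace.toDual ℝ _) a) ((0:ℝ) • v + x) := by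
      rw [hx]; exact hg.hasFDerivAt
    have := hF.comp_hasDerivAt 0 hL
    exact this
  have hφconv : ConvexOn ℝ Set.univ φ := by
    have h := hconv.comp_affineMap
      (AffineMap.lineMap (x : EuclideanSpace ℝ (Fin m)) u)
    have heq : (g ∘ (AffineMap.lineMap (x : EuclideanSpace ℝ (Fin m)) u)) = φ := by
      funext t
      simp [hφ, AffineMap.lineMap_apply, hv]
    have hset : (AffineMap.lineMap (x : EuclideanSpace ℝ (Fin m)) u) ⁻¹' Set.univ
        = (Set.univ : Set ℝ) := by simp
    rw [heq, hset] at h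
    exact h
  have hslope := hφconv.le_slope_of_hasDerivAt (Set.mem_univ 0) (Set.mem_univ 1)
    one_pos hd
  have h1 : φ 1 = g u := by simp [hφ, hv]
  have h0 : φ 0 = g x := by simp [hφ]
  have hinner : (InnerProductSpace.toDual ℝ _ a) v = ∑ i, a i * (u i - x i) := by
    simp [InnerProductSpace.toDual_apply_apply, PiLp.inner_apply, RCLike.inner_apply, hv,
      PiLp.sub_apply]
    exact Finset.sum_congr rfl (fun i _ => mul_comm _ _)
  rw [hinner] at hslope
  simpa [slope, h1, h0] using hslope

/-- if `g` is convex and differentiable and `u*` is a P-stationary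
point (with some parameter `γ > 0`) of `min g(u) + C‖u₊‖₀`, then `u*` is a local
minimizer of `u ↦ g(u) + C‖u₊‖₀`. -/
theorem PStationary_is_local_min_general {m : ℕ} (C : ℝ) (hC : 0 < C)
    (g : EuclideanSpace ℝ (Fin m) → ℝ)
    (hconv : ConvexOn ℝ Set.univ g)
    (g' : EuclideanSpace ℝ (Fin m) → EuclideanSpace ℝ (Fin m))
    (hg : ∀ u, HasGradientAt g (g' u) u)
    (ustar : EuclideanSpace ℝ (Fin m)) (γ : ℝ) (hγ : 0 < γ)
    (h0 : ∀ i, (0 < ustar i - γ * g' ustar i ∧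
        ustar i - γ * g' ustar i ≤ Real.sqrt (2 * γ * C)) → ustar i = 0)
    (hid : ∀ i, ¬(0 < ustar i - γ * g' ustar i ∧
        ustar i - γ * g' ustar i ≤ Real.sqrt (2 * γ * C)) →
        ustar i = ustar i - γ * g' ustar i) :
    IsLocalMin (fun u : EuclideanSpace ℝ (Fin m) =>
      g u + C * (l01norm (fun i => u i) : ℝ)) ustar := by
  set a : Fin m → ℝ := fun i => g' ustar i with ha
  have hdich : ∀ i, a i = 0 ∨ (ustar i = 0 ∧ a i < 0) := by
    intro i
    by_cases hi : (0 < ustar i - γ * g' ustar i ∧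
        ustar i - γ * g' ustar i ≤ Real.sqrt (2 * γ * C))
    · right
      have hz := h0 i hi
      refine ⟨hz, ?_⟩
      have h1 := hi.1
      rw [hz] at h1
      have : g' ustar i < 0 := by nlinarith
      simpa [ha] using this
    · left
      have h1 := hid i hi
      have h2 : γ * g' ustar i = 0 := by linarith
      have h3 : g' ustar i = 0 := by
        rcases mul_eq_zero.1 h2 with h | h
        · exact absurd h (ne_of_gt hγ)
        · exact h
      simpa [ha] using h3
  set c : Fin m → ℝ := fun i => if ustar i = 0 then C / (|a i| + 1) else |ustar i|
    with hc
  have hcpos : ∀ i, 0 < c i := by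
    intro i
    by_cases h : ustar i = 0
    · simp only [hc, if_pos h]
      positivity
    · simp only [hc, if_neg h]
      exact abs_pos.2 h
  set s : Finset ℝ := insert (1:ℝ) (Finset.univ.image c) with hs
  have hsne : s.Nonempty := ⟨1, Finset.mem_insert_self _ _⟩
  set δ : ℝ := s.min' hsne with hδ
  have hδpos : 0 < δ := by
    rw [hδ, Finset.lt_min'_iff]
    intro y hy
    rw [hs, Finset.mem_insert, Finset.mem_image] at hy
    rcases hy with rfl | ⟨i, _, rfl⟩
    · norm_num
    · exact hcpos i
  have hδle : ∀ i, δ ≤ c i := by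
    intro i
    apply Finset.min'_le
    rw [hs, Finset.mem_insert]
    exact Or.inr (Finset.mem_image_of_mem c (Finset.mem_univ i))
  have hδle0 : ∀ i, ustar i = 0 → δ ≤ C / (|a i| + 1) := by
    intro i h
    have h1 := hδle i
    simp only [hc, if_pos h] at h1
    exact h1
  have hδle1 : ∀ i, ustar i ≠ 0 → δ ≤ |ustar i| := by
    intro i h
    have h1 := hδle i
    simp only [hc, if_neg h] at h1
    exact h1
  filter_upwards [Metric.ball_mem_nhds ustar hδpos] with u hu
  have hcoord : ∀ i, |u i - ustar i| < δ := by
    intro i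
    calc |u i - ustar i| = |(u - ustar) i| := by simp [PiLp.sub_apply]
    _ ≤ ‖u - ustar‖ := coord_abs_le_norm _ i
    _ < δ := by rwa [← dist_eq_norm, ← Metric.mem_ball]
  have hpt : ∀ i ∈ Finset.univ, (0:ℝ) ≤ a i * (u i - ustar i)
      + ((if 0 < u i then C else 0) - (if 0 < ustar i then C else 0)) := by
    intro i _
    rcases hdich i with hA | ⟨hB0, hBneg⟩
    · rw [hA, zero_mul, zero_add]
      by_cases hup : 0 < ustar i
      · have hne : ustar i ≠ 0 := ne_of_gt hup
        have h1 : δ ≤ ustar i := by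
          have := hδle1 i hne
          rwa [abs_of_pos hup] at this
        have h2 : 0 < u i := by
          have h3 := abs_lt.1 (hcoord i)
          linarith [h3.1]
        simp [hup, h2]
      · rw [if_neg hup]
        split <;> linarith
    · rw [hB0, sub_zero, if_neg (lt_irrefl (0:ℝ))]
      by_cases hup : 0 < u i
      · rw [if_pos hup]
        have hpos : (0:ℝ) < |a i| + 1 := by positivity
        have hub : u i < C / (|a i| + 1) := by
          have h1 := hδle0 i hB0
          have h2 := hcoord i
          rw [hB0, sub_zero, abs_of_pos hup] at h2
          linarith
        have hub' : u i * (|a i| + 1) < C := (lt_div_iff₀ hpos).1 hub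
        have habs : |a i| = -a i := abs_of_neg hBneg
        nlinarith
      · rw [if_neg hup]
        push_neg at hup
        nlinarith [mul_nonneg (neg_nonneg.2 hBneg.le) (neg_nonneg.2 hup)]
  have hgrad : ∑ i, a i * (u i - ustar i) ≤ g u - g ustar :=
    grad_convex_ineq hconv (hg ustar) u
  have hcount : ∀ (v : EuclideanSpace ℝ (Fin m)),
      C * ((l01norm fun i => v i : ℕ) : ℝ) = ∑ i, if 0 < v i then C else 0 := by
    intro v
    rw [l01norm, Finset.card_filter]
    push_cast
    rw [Finset.mul_sum]
    simp [mul_ite]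
  have hsum := Finset.sum_nonneg hpt
  rw [Finset.sum_add_distrib, Finset.sum_sub_distrib] at hsum
  simp only [hcount]
  linarith [hgrad, hsum]
end

section
/- Let σ > 0, let w^k ∈ ℝⁿ, b^k ∈ ℝ, λ^k ∈ ℝ^m, let T ⊆ {1,…,m} with complement T̄, and let A_T (resp. A_{T̄}) denote the submatrix of A consisting of the rows indexed by T (resp. T̄). Define z = 1 − Aw^k − b^k y − λ^k/σ and suppose u ∈ ℝ^m satisfies u_i = z_i for all i ∈ T̄. Define v = −(u + b^k y − 1 + λ^k/σ) and the function L(w) = (1/2)‖w‖² − (σ/2)‖A_{T̄}(w − w^k)‖² + ⟨λ^k, Aw⟩ + (σ/2)‖u − 1 + Aw + b^k y‖². Then the matrix I + σ A_Tᵀ A_T is positive definite, and w ∈ ℝⁿ is a global minimizer of L if and only if (I + σ A_Tᵀ A_T) w = σ A_Tᵀ v_T, where v_T is the subvector of v indexed by T; in particular L has a unique global minimizer. -/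
open Finset

/-- the `w`-subproblem of `L_{0/1}`ADMM. The matrix
`I + σ A_Tᵀ A_T` is positive definite, and `w` globally minimizes the subproblem
objective `L` iff `(I + σ A_Tᵀ A_T) w = σ A_Tᵀ v_T`; in particular `L` has a
unique global minimizer. -/
theorem admm_w_subproblem {m n : ℕ}
    (x : Fin m → Fin n → ℝ) (y : Fin m → ℝ) (hy : ∀ i, y i = 1 ∨ y i = -1)
    (A : Matrix (Fin m) (Fin n) ℝ) (hA : ∀ i j, A i j = y i * x i j)
    (σ : ℝ) (hσ : 0 < σ)
    (wk : Fin n → ℝ) (bk : ℝ) (lam : Fin m → ℝ)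
    (T : Finset (Fin m))
    (z u v : Fin m → ℝ)
    (hz : ∀ i, z i = 1 - A.mulVec wk i - bk * y i - lam i / σ)
    (hu : ∀ i ∉ T, u i = z i)
    (hv : ∀ i, v i = -(u i + bk * y i - 1 + lam i / σ))
    (L : (Fin n → ℝ) → ℝ)
    (hL : ∀ w, L w =
      (1 / 2) * (∑ j, (w j) ^ 2)
        - (σ / 2) * (∑ i ∈ Tᶜ, (A.mulVec (w - wk) i) ^ 2)
        + (∑ i, lam i * A.mulVec w i)
        + (σ / 2) * (∑ i, (u i - 1 + A.mulVec w i + bk * y i) ^ 2))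
    (M : Matrix (Fin n) (Fin n) ℝ)
    (hM : ∀ j k, M j k = (if j = k then 1 else 0) + σ * ∑ i ∈ T, A i j * A i k) :
    M.PosDef ∧
    (∀ w : Fin n → ℝ,
      (∀ w' : Fin n → ℝ, L w ≤ L w') ↔
        M.mulVec w = fun j => σ * ∑ i ∈ T, A i j * v i) ∧
    (∃! w : Fin n → ℝ, ∀ w' : Fin n → ℝ, L w ≤ L w') := by
  have hσ' : σ ≠ 0 := ne_of_gt hσ
  set c : Fin n → ℝ := fun j => σ * ∑ i ∈ T, A i j * v i with hcdef
  -- entrywise formula for M.mulVec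
  have hMv : ∀ (w : Fin n → ℝ) (j : Fin n),
      M.mulVec w j = w j + σ * ∑ i ∈ T, A i j * A.mulVec w i := by
    intro w j
    have h1 : M.mulVec w j
        = ∑ k, ((if j = k then 1 else 0) + σ * ∑ i ∈ T, A i j * A i k) * w k := by
      simp only [Matrix.mulVec, dotProduct, hM]
    rw [h1]
    simp only [add_mul, ite_mul, one_mul, zero_mul, Finset.sum_add_distrib,
      Finset.sum_ite_eq, Finset.mem_univ, if_true]
    congr 1
    calc ∑ k, σ * (∑ i ∈ T, A i j * A i k) * w k
        = ∑ k, ∑ i ∈ T, σ * (A i j * (A i k * w k)) := by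
          refine Finset.sum_congr rfl fun k _ => ?_
          rw [Finset.mul_sum, Finset.sum_mul]
          exact Finset.sum_congr rfl fun i _ => by ring
      _ = ∑ i ∈ T, ∑ k, σ * (A i j * (A i k * w k)) := Finset.sum_comm
      _ = σ * ∑ i ∈ T, A i j * A.mulVec w i := by
          rw [Finset.mul_sum]
          refine Finset.sum_congr rfl fun i _ => ?_
          simp only [Matrix.mulVec, dotProduct, Finset.mul_sum]
  -- bilinear form of M
  have hdot : ∀ h w : Fin n → ℝ, ∑ j, h j * M.mulVec w j
      = ∑ j, h j * w j + σ * ∑ i ∈ T, A.mulVec h i * A.mulVec w i := by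
    intro h w
    simp only [hMv, mul_add, Finset.sum_add_distrib]
    congr 1
    calc ∑ j, h j * (σ * ∑ i ∈ T, A i j * A.mulVec w i)
        = ∑ j, ∑ i ∈ T, σ * (A i j * h j * A.mulVec w i) := by
          refine Finset.sum_congr rfl fun j _ => ?_
          rw [Finset.mul_sum, Finset.mul_sum]
          exact Finset.sum_congr rfl fun i _ => by ring
      _ = ∑ i ∈ T, ∑ j, σ * (A i j * h j * A.mulVec w i) := Finset.sum_comm
      _ = σ * ∑ i ∈ T, A.mulVec h i * A.mulVec w i := by
          rw [Finset.mul_sum]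
          refine Finset.sum_congr rfl fun i _ => ?_
          rw [show A.mulVec h i = ∑ j, A i j * h j from rfl, Finset.sum_mul, Finset.mul_sum]
  -- linear form of c
  have hcw : ∀ h : Fin n → ℝ, ∑ j, c j * h j = σ * ∑ i ∈ T, v i * A.mulVec h i := by
    intro h
    calc ∑ j, c j * h j
        = ∑ j, ∑ i ∈ T, σ * (v i * (A i j * h j)) := by
          refine Finset.sum_congr rfl fun j _ => ?_
          simp only [hcdef]
          rw [Finset.mul_sum, Finset.sum_mul]
          exact Finset.sum_congr rfl fun i _ => by ring
      _ = ∑ i ∈ T, ∑ j, σ * (v i * (A i j * h j)) := Finset.sum_comm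
      _ = σ * ∑ i ∈ T, v i * A.mulVec h i := by
          rw [Finset.mul_sum]
          refine Finset.sum_congr rfl fun i _ => ?_
          simp only [Matrix.mulVec, dotProduct, Finset.mul_sum]
  -- L as an explicit quadratic
  have key : ∃ C : ℝ, ∀ w, L w = (1/2) * ∑ j, (w j)^2
      + (σ/2) * ∑ i ∈ T, (A.mulVec w i)^2
      - σ * ∑ i ∈ T, v i * A.mulVec w i + C := by
    refine ⟨(∑ i ∈ Tᶜ, (lam i * A.mulVec wk i + lam i^2/(2*σ)))
      + (σ/2) * ∑ i ∈ T, (v i + lam i/σ)^2, fun w => ?_⟩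
    rw [hL]
    rw [← Finset.sum_add_sum_compl T (fun i => lam i * A.mulVec w i),
        ← Finset.sum_add_sum_compl T (fun i => (u i - 1 + A.mulVec w i + bk * y i)^2)]
    have e1 : ∑ i ∈ Tᶜ, ((σ/2) * (u i - 1 + A.mulVec w i + bk * y i)^2
        - (σ/2) * (A.mulVec (w - wk) i)^2 + lam i * A.mulVec w i)
        = ∑ i ∈ Tᶜ, (lam i * A.mulVec wk i + lam i^2/(2*σ)) := by
      refine Finset.sum_congr rfl fun i hi => ?_
      rw [Finset.mem_compl] at hi
      rw [Matrix.mulVec_sub, Pi.sub_apply, hu i hi, hz i]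
      field_simp
      ring
    have e2 : ∑ i ∈ T, ((σ/2) * (u i - 1 + A.mulVec w i + bk * y i)^2 + lam i * A.mulVec w i)
        = ∑ i ∈ T, ((σ/2) * (A.mulVec w i)^2 - σ * (v i * A.mulVec w i)
            + (σ/2) * (v i + lam i/σ)^2) := by
      refine Finset.sum_congr rfl fun i hi => ?_
      have huv : u i = -(v i) - bk * y i + 1 - lam i / σ := by
        have := hv i; linarith
      rw [huv]
      field_simp
      ring
    have d1 : ∑ i ∈ Tᶜ, ((σ/2) * (u i - 1 + A.mulVec w i + bk * y i)^2
        - (σ/2) * (A.mulVec (w - wk) i)^2 + lam i * A.mulVec w i)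
        = (σ/2) * ∑ i ∈ Tᶜ, (u i - 1 + A.mulVec w i + bk * y i)^2
          - (σ/2) * ∑ i ∈ Tᶜ, (A.mulVec (w - wk) i)^2
          + ∑ i ∈ Tᶜ, lam i * A.mulVec w i := by
      rw [Finset.sum_add_distrib, Finset.sum_sub_distrib, Finset.mul_sum, Finset.mul_sum]
    have d2 : ∑ i ∈ T, ((σ/2) * (u i - 1 + A.mulVec w i + bk * y i)^2 + lam i * A.mulVec w i)
        = (σ/2) * ∑ i ∈ T, (u i - 1 + A.mulVec w i + bk * y i)^2
          + ∑ i ∈ T, lam i * A.mulVec w i := by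
      rw [Finset.sum_add_distrib, Finset.mul_sum]
    have d3 : ∑ i ∈ T, ((σ/2) * (A.mulVec w i)^2 - σ * (v i * A.mulVec w i)
            + (σ/2) * (v i + lam i/σ)^2)
        = (σ/2) * ∑ i ∈ T, (A.mulVec w i)^2 - σ * ∑ i ∈ T, v i * A.mulVec w i
          + (σ/2) * ∑ i ∈ T, (v i + lam i/σ)^2 := by
      rw [Finset.sum_add_distrib, Finset.sum_sub_distrib, Finset.mul_sum, Finset.mul_sum,
        Finset.mul_sum]
    rw [d1] at e1
    rw [d2, d3] at e2
    linear_combination e1 + e2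
  obtain ⟨C, key⟩ := key
  -- expansion of L around a point
  have hexp : ∀ w h : Fin n → ℝ, L (w + h)
      = L w + (∑ j, h j * M.mulVec w j - ∑ j, c j * h j)
        + ((1/2) * ∑ j, (h j)^2 + (σ/2) * ∑ i ∈ T, (A.mulVec h i)^2) := by
    intro w h
    rw [key, key, hdot, hcw]
    have s1 : ∑ j, ((w + h) j)^2
        = ∑ j, (w j)^2 + (2 * ∑ j, h j * w j + ∑ j, (h j)^2) := by
      rw [Finset.mul_sum, ← Finset.sum_add_distrib, ← Finset.sum_add_distrib]
      exact Finset.sum_congr rfl fun j _ => by simp only [Pi.add_apply]; ring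
    have s2 : ∑ i ∈ T, (A.mulVec (w + h) i)^2
        = ∑ i ∈ T, (A.mulVec w i)^2
          + (2 * ∑ i ∈ T, A.mulVec h i * A.mulVec w i + ∑ i ∈ T, (A.mulVec h i)^2) := by
      rw [Finset.mul_sum, ← Finset.sum_add_distrib, ← Finset.sum_add_distrib]
      refine Finset.sum_congr rfl fun i _ => ?_
      rw [Matrix.mulVec_add, Pi.add_apply]; ring
    have s3 : ∑ i ∈ T, v i * A.mulVec (w + h) i
        = ∑ i ∈ T, v i * A.mulVec w i + ∑ i ∈ T, v i * A.mulVec h i := by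
      rw [← Finset.sum_add_distrib]
      refine Finset.sum_congr rfl fun i _ => ?_
      rw [Matrix.mulVec_add, Pi.add_apply]; ring
    rw [s1, s2, s3]
    ring
  -- positivity of the quadratic form
  have hquad : ∀ g : Fin n → ℝ, g ≠ 0 → 0 < ∑ j, (g j)^2 := by
    intro g hg
    have : ∃ j, g j ≠ 0 := by
      by_contra hcon; push_neg at hcon; exact hg (funext hcon)
    obtain ⟨j, hj⟩ := this
    exact Finset.sum_pos' (fun i _ => sq_nonneg _)
      ⟨j, Finset.mem_univ j, by positivity⟩
  have hAq : ∀ g : Fin n → ℝ, 0 ≤ ∑ i ∈ T, (A.mulVec g i)^2 :=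
    fun g => Finset.sum_nonneg fun i _ => sq_nonneg _
  -- positive definiteness
  have hsym : ∀ j k, M k j = M j k := by
    intro j k
    rw [hM, hM]
    congr 1
    · simp [eq_comm]
    · congr 1
      exact Finset.sum_congr rfl fun i _ => mul_comm _ _
  have hpd : M.PosDef := by
    refine Matrix.posDef_iff_dotProduct_mulVec.mpr ⟨Matrix.ext fun j k => ?_, fun g hg => ?_⟩
    · simp only [Matrix.conjTranspose_apply, star_trivial]; exact hsym j k
    · have hq : dotProduct (star g) (M.mulVec g)
          = ∑ j, (g j)^2 + σ * ∑ i ∈ T, (A.mulVec g i)^2 := by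
        simp only [star_trivial, dotProduct]
        rw [hdot]
        congr 1
        · exact Finset.sum_congr rfl fun j _ => (sq (g j)).symm
        · congr 1
          exact Finset.sum_congr rfl fun i _ => (sq _).symm
      rw [hq]
      have := hquad g hg
      have := mul_nonneg hσ.le (hAq g)
      linarith
  -- the minimizer characterization
  have hiff : ∀ w : Fin n → ℝ, (∀ w', L w ≤ L w') ↔ M.mulVec w = c := by
    intro w
    constructor
    · intro hmin
      by_contra hne
      set g : Fin n → ℝ := fun j => M.mulVec w j - c j with hg
      have hgne : g ≠ 0 := by
        intro h0
        apply hne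
        funext j
        have := congrFun h0 j
        simp only [hg, Pi.zero_apply] at this
        linarith
      set G : ℝ := ∑ j, (g j)^2 with hG
      have hGpos : 0 < G := hquad g hgne
      set Bq : ℝ := (1/2) * G + (σ/2) * ∑ i ∈ T, (A.mulVec g i)^2 with hBq
      have hBqpos : 0 < Bq := by
        have := mul_nonneg (by linarith : (0:ℝ) ≤ σ/2) (hAq g)
        rw [hBq]; linarith
      set t : ℝ := G / (2 * Bq) with ht
      have htpos : 0 < t := div_pos hGpos (by linarith)
      -- instantiate with h = fun j => -t * g j
      have hstep := hexp w (fun j => -t * g j)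
      have eAv : ∀ i, A.mulVec (fun j => -t * g j) i = -t * A.mulVec g i := by
        intro i
        simp only [Matrix.mulVec, dotProduct, Finset.mul_sum]
        exact Finset.sum_congr rfl fun j _ => by ring
      have e1 : ∑ j, (fun j => -t * g j) j * M.mulVec w j - ∑ j, c j * ((fun j => -t * g j) j)
          = -t * G := by
        simp only
        rw [← Finset.sum_sub_distrib, hG, Finset.mul_sum]
        refine Finset.sum_congr rfl fun j _ => ?_
        have : M.mulVec w j = g j + c j := by rw [hg]; ring
        rw [this]; ring
      have e2 : (1/2) * ∑ j, ((fun j => -t * g j) j)^2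
          + (σ/2) * ∑ i ∈ T, (A.mulVec (fun j => -t * g j) i)^2 = t^2 * Bq := by
        simp only [eAv]
        rw [hBq, hG]
        have q1 : ∑ j, (-t * g j)^2 = t^2 * ∑ j, (g j)^2 := by
          rw [Finset.mul_sum]; exact Finset.sum_congr rfl fun j _ => by ring
        have q2 : ∑ i ∈ T, (-t * A.mulVec g i)^2 = t^2 * ∑ i ∈ T, (A.mulVec g i)^2 := by
          rw [Finset.mul_sum]; exact Finset.sum_congr rfl fun i _ => by ring
        rw [q1, q2]; ring
      rw [e1, e2] at hstep
      have hle := hmin (w + fun j => -t * g j)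
      rw [hstep] at hle
      -- hle : L w ≤ L w + (-t * G) + t^2 * Bq
      have ht2 : t^2 * Bq = t * G / 2 := by
        rw [ht]; field_simp
      rw [ht2] at hle
      nlinarith
    · intro heq w'
      have hstep := hexp w (w' - w)
      have hww : w + (w' - w) = w' := by funext j; simp
      rw [hww] at hstep
      have e1 : ∑ j, (w' - w) j * M.mulVec w j - ∑ j, c j * (w' - w) j = 0 := by
        rw [← Finset.sum_sub_distrib]
        refine Finset.sum_eq_zero fun j _ => ?_
        have : M.mulVec w j = c j := congrFun heq j
        rw [this]; ring
      rw [e1] at hstep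
      have h2 : 0 ≤ (1/2) * ∑ j, ((w' - w) j)^2 + (σ/2) * ∑ i ∈ T, (A.mulVec (w' - w) i)^2 := by
        have := Finset.sum_nonneg (fun j (_ : j ∈ Finset.univ) => sq_nonneg ((w' - w) j))
        have := hAq (w' - w)
        positivity
      linarith [hstep]
  refine ⟨hpd, hiff, ?_⟩
  have hdet : IsUnit M.det := isUnit_iff_ne_zero.mpr hpd.det_pos.ne'
  refine ⟨M⁻¹.mulVec c, (hiff _).mpr ?_, fun w hw => ?_⟩
  · rw [Matrix.mulVec_mulVec, Matrix.mul_nonsing_inv _ hdet, Matrix.one_mulVec]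
  · have h1 := (hiff w).mp hw
    have := congrArg (M⁻¹.mulVec ·) h1
    simpa [Matrix.mulVec_mulVec, Matrix.nonsing_inv_mul _ hdet, Matrix.one_mulVec] using this
end
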